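/- Let g : ℕ → ℕ be a function with g(0) = 1 and g(ℓ) ≥ 1 for all ℓ ∈ ℕ. Then for every integer n ≥ 1, Ψ_g(n) ≤ 2^{n − Φ_g(n) + log₂ n}. -/

import Mathlib

open Real Finset

lemma choose_le_two_pow' (n k : ℕ) : n.choose k ≤ 2 ^ n := by
  rcases le_or_gt k n with h | h
  · calc n.choose k ≤ ∑ i ∈ Finset.range (n+1), n.choose i :=
        Finset.single_le_sum (f := fun i => n.choose i) (fun _ _ => Nat.zero_le _)
          (Finset.mem_range.mpr (by omega))
    _ = 2 ^ n := Nat.sum_range_choose n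
  · simp [Nat.choose_eq_zero_of_lt h]

lemma choose_mono_half (n : ℕ) : ∀ b a : ℕ, a ≤ b → 2 * b ≤ n → n.choose a ≤ n.choose b := by
  intro b
  induction b with
  | zero => intro a ha _; simp [Nat.le_zero.mp ha]
  | succ b ih =>
    intro a ha hb
    rcases Nat.eq_or_lt_of_le ha with h | h
    · subst h; exact le_rfl
    · exact (ih a (by omega) (by omega)).trans (Nat.choose_le_succ_of_lt_half_left (by omega))

lemma div_pow_le_choose : ∀ (L m : ℕ), L ≤ m → ((m : ℝ) / L) ^ L ≤ m.choose L := by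
  intro L
  induction L with
  | zero => intro m _; simp
  | succ L ih =>
    intro m hm
    have hm1 : 1 ≤ m := by omega
    have hid : m * (m-1).choose L = m.choose (L+1) * (L+1) := by
      have h := Nat.add_one_mul_choose_eq (m-1) L
      rw [Nat.sub_add_cancel hm1] at h
      exact h
    have hcast : ((m - 1 : ℕ) : ℝ) = (m:ℝ) - 1 := by
      push_cast [hm1]; ring
    rcases Nat.eq_zero_or_pos L with h0 | hL
    · subst h0
      norm_num [Nat.choose_one_right]
    · have hLpos : (0:ℝ) < L := by exact_mod_cast hL
      have hL1pos : (0:ℝ) < (L:ℝ) + 1 := by positivity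
      have hstep : (m:ℝ)/((L:ℝ)+1) ≤ ((m:ℝ)-1)/L := by
        rw [div_le_div_iff₀ hL1pos hLpos]
        have : (L:ℝ) + 1 ≤ m := by exact_mod_cast hm
        nlinarith
      have hih : (((m:ℝ)-1)/L)^L ≤ ((m-1).choose L : ℝ) := by
        have := ih (m-1) (by omega)
        rwa [hcast] at this
    
      have hnn : (0:ℝ) ≤ (m:ℝ)/((L:ℝ)+1) := by positivity
      rw [show ((L+1:ℕ):ℝ) = (L:ℝ)+1 by push_cast; ring]
      calc ((m:ℝ)/((L:ℝ)+1))^(L+1) = ((m:ℝ)/((L:ℝ)+1)) * ((m:ℝ)/((L:ℝ)+1))^L := by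
            ring
        _ ≤ ((m:ℝ)/((L:ℝ)+1)) * (((m:ℝ)-1)/L)^L := by
            apply mul_le_mul_of_nonneg_left (pow_le_pow_left₀ hnn hstep L) hnn
        _ ≤ ((m:ℝ)/((L:ℝ)+1)) * ((m-1).choose L : ℝ) := by
            apply mul_le_mul_of_nonneg_left hih hnn
        _ = ((m:ℝ) * ((m-1).choose L : ℝ))/((L:ℝ)+1) := by ring
        _ = (m.choose (L+1) : ℝ) := by
            have : (m:ℝ) * ((m-1).choose L : ℝ) = (m.choose (L+1) : ℝ) * ((L:ℝ)+1) := by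
              exact_mod_cast hid
            rw [this, mul_div_assoc, div_self (by positivity), mul_one]

lemma pow_self_le_three (s : ℕ) : (s:ℝ)^s ≤ 3^s * (s.factorial : ℝ) := by
  induction s with
  | zero => simp
  | succ s ih =>
    have key : ((s:ℝ)+1)^s ≤ 3 * (s:ℝ)^s := by
      rcases Nat.eq_zero_or_pos s with h0 | hs
      · subst h0; norm_num
      · have hs' : (0:ℝ) < s := by exact_mod_cast hs
        have h1 : ((s:ℝ)+1) = (1 + 1/s) * s := by field_simp
        have h2 : (1 + 1/(s:ℝ)) ≤ Real.exp (1/s) := by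
          have := Real.add_one_le_exp (1/(s:ℝ)); linarith
        have h3 : (1 + 1/(s:ℝ))^s ≤ Real.exp (1/s) ^ s := pow_le_pow_left₀ (by positivity) h2 s
        have h4 : Real.exp (1/(s:ℝ)) ^ s = Real.exp 1 := by
          rw [← Real.exp_nat_mul]
          congr 1
          field_simp
        have h5 : Real.exp 1 ≤ 3 := le_of_lt (lt_trans Real.exp_one_lt_d9 (by norm_num))
        have h6 : (1 + 1/(s:ℝ))^s ≤ 3 := by rw [h4] at h3; linarith
        calc ((s:ℝ)+1)^s = (1+1/(s:ℝ))^s * (s:ℝ)^s := by rw [h1, mul_pow]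
          _ ≤ 3 * (s:ℝ)^s := by
              apply mul_le_mul_of_nonneg_right h6 (by positivity)
    have hsn : (0:ℝ) ≤ (s:ℝ) + 1 := by positivity
    have ih' : 3 * (s:ℝ)^s ≤ 3 * (3^s * s.factorial) := by nlinarith [ih]
    calc ((s+1:ℕ):ℝ)^(s+1) = (((s:ℝ)+1)^s) * ((s:ℝ)+1) := by push_cast; ring
      _ ≤ (3*(s:ℝ)^s) * ((s:ℝ)+1) := mul_le_mul_of_nonneg_right key hsn
      _ ≤ (3*(3^s * s.factorial)) * ((s:ℝ)+1) := mul_le_mul_of_nonneg_right ih' hsn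
      _ = 3^(s+1) * (((s+1).factorial : ℕ):ℝ) := by
          rw [Nat.factorial_succ]; push_cast; ring

lemma twelve_le (x : ℝ) (hx : 1 ≤ x) : 12 * x^2 ≤ (16:ℝ) ^ x := by
  have h1 : (16:ℝ)^x = Real.exp (Real.log 16 * x) := Real.rpow_def_of_pos (by norm_num) x
  have hlog : Real.log 16 = 4 * Real.log 2 := by
    rw [show (16:ℝ) = 2^(4:ℕ) by norm_num, Real.log_pow]; push_cast; ring
  have hl2 : 0.6931471803 < Real.log 2 := Real.log_two_gt_d9
  set u := x - 1 with hu
  have hu0 : 0 ≤ u := by simp [hu]; linarith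
  have h2 : Real.exp (Real.log 16 * x) = 16 * Real.exp (Real.log 16 * u) := by
    rw [show Real.log 16 * x = Real.log 16 + Real.log 16 * u by rw [hu]; ring,
        Real.exp_add, Real.exp_log (by norm_num)]
  have hlu0 : 0 ≤ Real.log 16 * u := by
    apply mul_nonneg _ hu0
    rw [hlog]; positivity
  have h4 : 1 + (Real.log 16 * u)/2 ≤ Real.exp ((Real.log 16 * u)/2) := by
    have := Real.add_one_le_exp ((Real.log 16 * u)/2); linarith
  have h3 : (1 + (Real.log 16 * u)/2)^2 ≤ Real.exp (Real.log 16 * u) := by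
    have h5 : (0:ℝ) ≤ 1 + (Real.log 16 * u)/2 := by nlinarith [hlu0]
    calc (1 + (Real.log 16 * u)/2)^2 ≤ Real.exp ((Real.log 16*u)/2)^2 := by
          apply pow_le_pow_left₀ h5 h4
      _ = Real.exp (Real.log 16 * u) := by
          rw [sq, ← Real.exp_add]; ring_nf
  rw [h1, h2]
  rw [hlog] at h3 ⊢
  have hx' : x = u + 1 := by rw [hu]; ring
  rw [hx']
  have ha : (0.6931:ℝ)*u ≤ Real.log 2 * u :=
    mul_le_mul_of_nonneg_right (by linarith) hu0
  have hb : (1+2*((0.6931:ℝ)*u))^2 ≤ (1+2*(Real.log 2*u))^2 := by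
    apply pow_le_pow_left₀ (by nlinarith [hu0]) (by linarith) 2
  have hb2 : (1+2*(Real.log 2*u))^2 ≤ Real.exp (4 * Real.log 2 * u) := by
    calc (1+2*(Real.log 2*u))^2 = (1 + 4 * Real.log 2 * u / 2)^2 := by ring_nf
      _ ≤ Real.exp (4 * Real.log 2 * u) := h3
  nlinarith [hb, hb2, hu0, sq_nonneg u, mul_nonneg hu0 hu0]

lemma lemmaM (n s : ℕ) (hs1 : 1 ≤ s) (hsn : 4 * s ≤ n) :
    (n.choose s : ℝ) * ((n:ℝ)/(4*(s:ℝ)))^s ≤ 2^n := by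
  have hs0 : (0:ℝ) < s := by exact_mod_cast hs1
  have hn1 : 1 ≤ n := by omega
  have hn0 : (0:ℝ) < n := by exact_mod_cast hn1
  set x : ℝ := (n:ℝ)/(4*(s:ℝ)) with hx
  have hx1 : 1 ≤ x := by
    rw [hx, le_div_iff₀ (by positivity)]
    have h := (Nat.cast_le (α:=ℝ)).mpr hsn
    push_cast at h
    linarith
  have hfac : (0:ℝ) < (s.factorial : ℝ) := by exact_mod_cast s.factorial_pos
  have h1 : (n.choose s : ℝ) ≤ 3^s * (n:ℝ)^s / (s:ℝ)^s := by
    refine le_trans (Nat.choose_le_pow_div s n) ?_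
    rw [div_le_div_iff₀ hfac (by positivity)]
    calc (n:ℝ)^s * (s:ℝ)^s ≤ (n:ℝ)^s * (3^s * s.factorial) := by
          apply mul_le_mul_of_nonneg_left (pow_self_le_three s) (by positivity)
      _ = 3^s*(n:ℝ)^s * s.factorial := by ring
  have key : 3^s * (n:ℝ)^s/(s:ℝ)^s * x^s = (12 * x^2)^s := by
    have hns : (n:ℝ)/(s:ℝ) = 4*x := by rw [hx]; field_simp
    calc 3^s * (n:ℝ)^s/(s:ℝ)^s * x^s = 3^s * (((n:ℝ)/s) * x)^s := by
          rw [mul_pow, div_pow]; ring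
      _ = 3^s * (4*x*x)^s := by rw [hns]
      _ = (12*x^2)^s := by rw [← mul_pow]; ring_nf
  have h12 : (12*x^2)^s ≤ ((16:ℝ)^x)^s := pow_le_pow_left₀ (by positivity) (twelve_le x hx1) s
  have h16 : ((16:ℝ)^x)^s = 2^n := by
    rw [← Real.rpow_natCast ((16:ℝ)^x) s, ← Real.rpow_mul (by norm_num : (0:ℝ) ≤ 16)]
    have hxs : x * s = (n:ℝ)/4 := by rw [hx]; field_simp
    rw [hxs, show (16:ℝ) = 2^(4:ℝ) by
          rw [show (4:ℝ) = ((4:ℕ):ℝ) by norm_num, Real.rpow_natCast]; norm_num,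
       ← Real.rpow_mul (by norm_num : (0:ℝ) ≤ 2),
       show (4:ℝ) * ((n:ℝ)/4) = ((n:ℕ):ℝ) by ring, Real.rpow_natCast]
  calc (n.choose s:ℝ) * x^s ≤ (3^s*(n:ℝ)^s/(s:ℝ)^s) * x^s :=
        mul_le_mul_of_nonneg_right h1 (by positivity)
    _ = (12*x^2)^s := key
    _ ≤ ((16:ℝ)^x)^s := h12
    _ = 2^n := h16

/-- `Φ_g(n) = max_{0 ≤ ℓ ≤ n/4, ℓ ∈ ℕ} (ℓ·log₂(n/(4ℓ)) − log₂ g(ℓ))`.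
(For `ℓ = 0` the first summand vanishes, so the term is `−log₂ g(0)`,
matching the convention `x/0 = 0`, `log₂ 0 = 0` of Lean.) -/
noncomputable def Phi (g : ℕ → ℕ) (n : ℕ) : ℝ :=
  (Finset.range (n / 4 + 1)).sup' (Finset.nonempty_range_iff.mpr (by omega))
    fun ℓ => (ℓ : ℝ) * Real.logb 2 ((n : ℝ) / (4 * ℓ)) - Real.logb 2 (g ℓ)

/-- `Ψ_g(n) = max_{0 ≤ k ≤ n} min_{0 ≤ t ≤ k} (C(n,t)/C(k,t)) · g(k−t)`. -/
noncomputable def Psi (g : ℕ → ℕ) (n : ℕ) : ℝ :=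
  (Finset.range (n + 1)).sup' (Finset.nonempty_range_iff.mpr (by omega)) fun k =>
    (Finset.range (k + 1)).inf' (Finset.nonempty_range_iff.mpr (by omega)) fun t =>
      ((n.choose t : ℝ) / (k.choose t : ℝ)) * (g (k - t) : ℝ)

/-- Lemma 6.12: `Ψ_g(n) ≤ 2^{n − Φ_g(n) + log₂ n}`. -/
theorem stmt13 (g : ℕ → ℕ) (hg0 : g 0 = 1) (hg : ∀ ℓ, 1 ≤ g ℓ) (n : ℕ) (hn : 1 ≤ n) :
    Psi g n ≤ (2 : ℝ) ^ ((n : ℝ) - Phi g n + Real.logb 2 n) := by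
  have npos : (0:ℝ) < n := by exact_mod_cast hn
  have two_pos : (0:ℝ) < 2 := by norm_num
  have hrw : (2:ℝ) ^ ((n:ℝ) - Phi g n + Real.logb 2 n)
      = 2^n * (2:ℝ)^(-(Phi g n)) * n := by
    rw [show (n:ℝ) - Phi g n + Real.logb 2 n = ((n:ℕ):ℝ) + (-(Phi g n)) + Real.logb 2 n by ring]
    rw [Real.rpow_add two_pos, Real.rpow_add two_pos, Real.rpow_natCast,
        Real.rpow_logb two_pos (by norm_num) npos]
  rw [hrw]
  obtain ⟨L, hLmem, hPhi0⟩ := Finset.exists_mem_eq_sup'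
    (Finset.nonempty_range_iff.mpr (by omega : n/4+1 ≠ 0))
    (fun ℓ => (ℓ : ℝ) * Real.logb 2 ((n : ℝ) / (4 * ℓ)) - Real.logb 2 (g ℓ))
  have hPhi : Phi g n
      = (L : ℝ) * Real.logb 2 ((n : ℝ) / (4 * L)) - Real.logb 2 (g L) := hPhi0
  have hLle : 4 * L ≤ n := by
    have := Finset.mem_range.mp hLmem; omega
  unfold Psi
  apply Finset.sup'_le
  intro k hk
  have hkn : k ≤ n := by have := Finset.mem_range.mp hk; omega
  rcases Nat.eq_zero_or_pos L with hL0 | hL1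
  · -- L = 0 : Phi = 0
    have hPhiz : Phi g n = 0 := by
      rw [hPhi, hL0]
      simp [hg0]
    rw [hPhiz]
    simp only [neg_zero, Real.rpow_zero, mul_one]
    refine le_trans (Finset.inf'_le _ (Finset.mem_range.mpr (Nat.lt_succ_self k))) ?_
    simp only [Nat.choose_self, Nat.sub_self, hg0, Nat.cast_one, div_one, mul_one]
    have h1 : (n.choose k : ℝ) ≤ (2:ℝ)^n := by
      exact_mod_cast choose_le_two_pow' n k
    have h2 : (1:ℝ) ≤ n := by exact_mod_cast hn
    calc (n.choose k : ℝ) ≤ (2:ℝ)^n := h1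
      _ ≤ (2:ℝ)^n * n := le_mul_of_one_le_right (by positivity) h2
  · -- L ≥ 1
    have hLpos : (0:ℝ) < L := by exact_mod_cast hL1
    set X : ℝ := (n:ℝ)/(4*(L:ℝ)) with hXdef
    have hXpos : (0:ℝ) < X := by rw [hXdef]; positivity
    have hX1 : (1:ℝ) ≤ X := by
      rw [hXdef, le_div_iff₀ (by positivity)]
      have h := (Nat.cast_le (α:=ℝ)).mpr hLle
      push_cast at h
      linarith
    have hXL : (0:ℝ) < X^L := by positivity
    have hgL : (0:ℝ) < (g L : ℝ) := by exact_mod_cast hg L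
    have h2Phi : (2:ℝ)^(-(Phi g n)) = (g L : ℝ) / X^L := by
      rw [hPhi]
      rw [show -((L:ℝ) * Real.logb 2 ((n:ℝ)/(4*(L:ℝ))) - Real.logb 2 (g L))
          = Real.logb 2 (g L) - Real.logb 2 ((n:ℝ)/(4*(L:ℝ))) * (L:ℝ) by ring]
      rw [Real.rpow_sub two_pos, Real.rpow_logb two_pos (by norm_num) hgL,
          Real.rpow_mul (by norm_num : (0:ℝ) ≤ 2),
          Real.rpow_logb two_pos (by norm_num) (by positivity : (0:ℝ) < (n:ℝ)/(4*(L:ℝ))),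
          Real.rpow_natCast]
    rw [h2Phi, show (2:ℝ)^n * ((g L:ℝ)/X^L) * n = ((2:ℝ)^n * (g L:ℝ) * n)/X^L by ring]
    rcases lt_or_ge k L with hkL | hLk
    · -- take t = k
      refine le_trans (Finset.inf'_le _ (Finset.mem_range.mpr (Nat.lt_succ_self k))) ?_
      rw [le_div_iff₀ hXL]
      simp only [Nat.choose_self, Nat.sub_self, hg0, Nat.cast_one, div_one, mul_one]
      have h1 : (n.choose k : ℝ) ≤ (n.choose L : ℝ) := by
        exact_mod_cast choose_mono_half n L k hkL.le (by omega)
      have h2 : (n.choose L:ℝ) * X^L ≤ 2^n := lemmaM n L hL1 hLle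
      have h3 : (1:ℝ) ≤ (g L : ℝ) * n := by
        have hh : (1:ℝ) ≤ (g L : ℝ) := by exact_mod_cast hg L
        have h2n : (1:ℝ) ≤ n := by exact_mod_cast hn
        nlinarith [mul_nonneg (sub_nonneg.mpr hh) (sub_nonneg.mpr h2n)]
      calc (n.choose k:ℝ) * X^L ≤ (n.choose L:ℝ)*X^L := mul_le_mul_of_nonneg_right h1 hXL.le
        _ ≤ (2:ℝ)^n := h2
        _ ≤ (2:ℝ)^n * ((g L:ℝ) * n) := le_mul_of_one_le_right (by positivity) h3
        _ = (2:ℝ)^n * (g L:ℝ) * n := by ring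
    · -- take t = k - L
      refine le_trans (Finset.inf'_le _ (Finset.mem_range.mpr
        (by omega : k - L < k + 1))) ?_
      have hkt : k - (k - L) = L := by omega
      rw [hkt]
      set t := k - L with htdef
      have htk : t ≤ k := Nat.sub_le k L
      have hCkt : (0:ℝ) < (k.choose t : ℝ) := by
        exact_mod_cast Nat.choose_pos htk
      rw [div_mul_eq_mul_div, div_le_div_iff₀ hCkt hXL]
      set m := n - t with hmdef
      have hLm : L ≤ m := by omega
      have hCm : (0:ℕ) < m.choose L := Nat.choose_pos hLm
      have hCmR : (0:ℝ) < (m.choose L : ℝ) := by exact_mod_cast hCm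
      have hid : (n.choose t : ℝ) * (m.choose L : ℝ) = (n.choose k : ℝ) * (k.choose t : ℝ) := by
        have h := Nat.choose_mul (n := n) htk
        rw [hkt] at h
        exact_mod_cast h.symm
      have hD : (n.choose k : ℝ) * X^L ≤ (2:ℝ)^n * n * (m.choose L : ℝ) := by
        rcases le_or_gt n (4*m) with hcase | hcase
        · have h1 : X ≤ (m:ℝ)/(L:ℝ) := by
            rw [hXdef, div_le_div_iff₀ (by positivity) hLpos]
            have h := (Nat.cast_le (α:=ℝ)).mpr hcase
            push_cast at h
            nlinarith
          have h2 : X^L ≤ ((m:ℝ)/(L:ℝ))^L := pow_le_pow_left₀ hXpos.le h1 L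
          have h3 : ((m:ℝ)/(L:ℝ))^L ≤ (m.choose L : ℝ) := div_pow_le_choose L m hLm
          have h4 : (n.choose k:ℝ) ≤ (2:ℝ)^n := by exact_mod_cast choose_le_two_pow' n k
          calc (n.choose k:ℝ)*X^L ≤ (2:ℝ)^n * (m.choose L : ℝ) :=
                mul_le_mul h4 (h2.trans h3) hXL.le (by positivity)
            _ = (2:ℝ)^n * 1 * (m.choose L : ℝ) := by ring
            _ ≤ (2:ℝ)^n * n * (m.choose L : ℝ) := by
                apply mul_le_mul_of_nonneg_right
                  (mul_le_mul_of_nonneg_left (by exact_mod_cast hn) (by positivity)) hCmR.le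
        · have hm1 : 1 ≤ m := by omega
          have hmL0 : (0:ℝ) < (m:ℝ) := by exact_mod_cast hm1
          have hj : n - k ≤ m := by omega
          have h1 : (n.choose k : ℝ) ≤ (n.choose m : ℝ) := by
            have := choose_mono_half n m (n-k) hj (by omega)
            rw [Nat.choose_symm hkn] at this
            exact_mod_cast this
          have hsplit : X = ((n:ℝ)/(4*(m:ℝ))) * ((m:ℝ)/(L:ℝ)) := by
            rw [hXdef]; field_simp
          have hbase1 : (1:ℝ) ≤ (n:ℝ)/(4*(m:ℝ)) := by
            rw [le_div_iff₀ (by positivity)]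
            have h := (Nat.cast_le (α:=ℝ)).mpr hcase.le
            push_cast at h
            linarith
          have h2 : ((n:ℝ)/(4*(m:ℝ)))^L ≤ ((n:ℝ)/(4*(m:ℝ)))^m :=
            pow_le_pow_right₀ hbase1 hLm
          have h3 : ((m:ℝ)/(L:ℝ))^L ≤ (m.choose L : ℝ) := div_pow_le_choose L m hLm
          have h4 : (n.choose m : ℝ) * ((n:ℝ)/(4*(m:ℝ)))^m ≤ (2:ℝ)^n :=
            lemmaM n m hm1 (by omega)
          calc (n.choose k:ℝ) * X^L
              = (n.choose k:ℝ) * ((n:ℝ)/(4*(m:ℝ)))^L * ((m:ℝ)/(L:ℝ))^L := by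
                rw [hsplit, mul_pow]; ring
            _ ≤ (n.choose m:ℝ) * ((n:ℝ)/(4*(m:ℝ)))^m * (m.choose L : ℝ) := by
                apply mul_le_mul
                  (mul_le_mul h1 h2 (by positivity) (by positivity)) h3
                  (by positivity) (by positivity)
            _ ≤ (2:ℝ)^n * (m.choose L : ℝ) := mul_le_mul_of_nonneg_right h4 hCmR.le
            _ = (2:ℝ)^n * 1 * (m.choose L : ℝ) := by ring
            _ ≤ (2:ℝ)^n * n * (m.choose L : ℝ) := by
                apply mul_le_mul_of_nonneg_right
                  (mul_le_mul_of_nonneg_left (by exact_mod_cast hn) (by positivity)) hCmR.le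
      -- combine
      refine le_of_mul_le_mul_right ?_ hCmR
      calc (n.choose t : ℝ) * (g L : ℝ) * X^L * (m.choose L : ℝ)
          = ((n.choose t : ℝ) * (m.choose L : ℝ)) * X^L * (g L : ℝ) := by ring
        _ = ((n.choose k:ℝ) * (k.choose t:ℝ)) * X^L * (g L : ℝ) := by rw [hid]
        _ = ((n.choose k:ℝ) * X^L) * ((k.choose t:ℝ) * (g L : ℝ)) := by ring
        _ ≤ ((2:ℝ)^n * n * (m.choose L : ℝ)) * ((k.choose t:ℝ) * (g L : ℝ)) :=
            mul_le_mul_of_nonneg_right hD (by positivity)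
        _ = (2:ℝ)^n * (g L:ℝ) * n * (k.choose t : ℝ) * (m.choose L : ℝ) := by ring
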